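/- For every natural N ≥ 2 and real δ with 0 < δ < 1, (1 - 1/N + δ/N)^N - (1 - 1/N)^N > δ / (2e). -/

import Mathlib

theorem stmt_6 (N : ℕ) (hN : 2 ≤ N) (δ : ℝ) (hδ0 : 0 < δ) (hδ1 : δ < 1) :
    (1 - 1 / (N : ℝ) + δ / N) ^ N - (1 - 1 / (N : ℝ)) ^ N > δ / (2 * Real.exp 1) := by
  have hN0 : (0:ℝ) < N := by positivity
  have hN1 : (1:ℝ) ≤ N := by exact_mod_cast Nat.one_le_of_lt hN
  have hN2 : (2:ℝ) ≤ N := by exact_mod_cast hN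
  set b : ℝ := 1 - 1 / (N : ℝ) with hbdef
  have hb : (0:ℝ) < b := by
    have : 1 / (N:ℝ) ≤ 1/2 := by
      apply one_div_le_one_div_of_le <;> linarith
    simp only [hbdef]; linarith
  have hbN : b = ((N:ℝ) - 1) / N := by field_simp [hbdef]; rw [hbdef, sub_mul, one_mul, one_div, inv_mul_cancel₀ hN0.ne']
  have hNm1 : (0:ℝ) < (N:ℝ) - 1 := by linarith
  -- Bernoulli step
  have hx0 : (0:ℝ) ≤ δ / N / b := by positivity
  have hbern := one_add_mul_le_pow (a := δ / N / b) (by linarith : (-2:ℝ) ≤ δ / N / b) N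
  have hkey1 : b ^ N + δ * b ^ (N - 1) ≤ (b + δ / N) ^ N := by
    have hbpow : (0:ℝ) ≤ b ^ N := by positivity
    have h1 : b ^ N * (1 + (N:ℝ) * (δ / N / b)) ≤ b ^ N * (1 + δ / N / b) ^ N :=
      mul_le_mul_of_nonneg_left hbern hbpow
    have h2 : b ^ N * (1 + δ / N / b) ^ N = (b + δ / N) ^ N := by
      rw [← mul_pow]
      congr 1
      field_simp
    have h3 : b ^ N * (1 + (N:ℝ) * (δ / N / b)) = b ^ N + δ * b ^ (N - 1) := by
      have hbp : b ^ N = b ^ (N - 1) * b := by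
        rw [← pow_succ]
        congr 1
        omega
      rw [hbp]
      field_simp
    rw [h2, h3] at h1
    exact h1
  -- b ^ (N-1) ≥ exp (-1)
  have hkey2 : Real.exp (-1) ≤ b ^ (N - 1) := by
    have ht : Real.exp (-(1 / ((N:ℝ) - 1))) ≤ b := by
      have hle : 1 / ((N:ℝ) - 1) + 1 ≤ Real.exp (1 / ((N:ℝ) - 1)) :=
        Real.add_one_le_exp _
      have hpos : (0:ℝ) < 1 / ((N:ℝ) - 1) + 1 := by positivity
      rw [Real.exp_neg]
      rw [inv_le_iff_one_le_mul₀ (Real.exp_pos _)] at *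
      · calc (1:ℝ) = b * (1 / ((N:ℝ) - 1) + 1) := by
              rw [hbN]; field_simp; ring
          _ ≤ b * Real.exp (1 / ((N:ℝ) - 1)) :=
              mul_le_mul_of_nonneg_left hle hb.le
    have h4 : Real.exp (-(1 / ((N:ℝ) - 1))) ^ (N - 1) ≤ b ^ (N - 1) :=
      pow_le_pow_left₀ (Real.exp_pos _).le ht _
    have h5 : Real.exp (-(1 / ((N:ℝ) - 1))) ^ (N - 1) = Real.exp (-1) := by
      rw [← Real.exp_nat_mul]
      congr 1
      have hc : ((N - 1 : ℕ) : ℝ) = (N:ℝ) - 1 := by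
        have : 1 ≤ N := by omega
        push_cast [Nat.cast_sub this]; ring
      rw [hc]
      field_simp
    rw [h5] at h4
    exact h4
  have hexp : Real.exp (-1) = (Real.exp 1)⁻¹ := by
    rw [Real.exp_neg]
  have hfinal : δ / Real.exp 1 ≤ (b + δ / N) ^ N - b ^ N := by
    have : δ * Real.exp (-1) ≤ δ * b ^ (N - 1) :=
      mul_le_mul_of_nonneg_left hkey2 hδ0.le
    rw [hexp] at this
    have h6 : δ * (Real.exp 1)⁻¹ = δ / Real.exp 1 := by ring
    linarith [hkey1]
  have hlt : δ / (2 * Real.exp 1) < δ / Real.exp 1 := by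
    have he : (0:ℝ) < Real.exp 1 := Real.exp_pos 1
    rw [div_lt_div_iff₀ (by positivity) he]
    nlinarith
  have : (1 - 1 / (N : ℝ) + δ / N) = b + δ / N := by rw [hbdef]
  rw [this]
  linarith
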